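/- arXiv:2506.20218 — 2 statements merged into one kernel-verified Lean document; each statement's English description precedes it below -/
import Mathlib

section
/- There exist a constant C6 with 0 < C6 < 1 and a natural number n0 such that for all integers n ≥ n0 with k ≤ n the following holds: if p_1 ≥ p_2 ≥ … ≥ p_k, h·p_1 ≥ 324·log n, and j ∈ {2,…,k} satisfies p_1 − p_j ≥ √(2·(p_1 + p_2)/h), then Pr(W_1) ≥ (1/(1 − C6)) · Pr(W_j). -/
open scoped BigOperators

noncomputable section

/-- The number of the `h` i.i.d. samples `ω` that are equal to opinion `i`. -/
def cnt {k h : ℕ} (ω : Fin h → Fin k) (i : Fin k) : ℕ :=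
  (Finset.univ.filter fun j => ω j = i).card

/-- The probability of the event `A` under `h` i.i.d. samples drawn from the
probability vector `p` on `Fin k` (multinomial sampling). -/
def multiPr (k h : ℕ) (p : Fin k → ℝ) (A : Set (Fin h → Fin k)) : ℝ :=
  ∑ ω : Fin h → Fin k, A.indicator (fun ω => ∏ j, p (ω j)) ω

/-- The maximal number of samples received by an opinion. -/
def maxCnt {k h : ℕ} (ω : Fin h → Fin k) : ℕ :=
  Finset.univ.sup (cnt ω)

/-- The number of opinions achieving the maximal number of samples. -/
def numMax {k h : ℕ} (ω : Fin h → Fin k) : ℕ :=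
  (Finset.univ.filter fun i => cnt ω i = maxCnt ω).card

/-- The probability that opinion `i` wins the `h`-majority with uniform
tie-breaking, jointly with the event `A`:
`E[ 1_A · 1{X_i = max_l X_l} / #{l : X_l maximal} ]`. -/
def winPrOn (k h : ℕ) (p : Fin k → ℝ) (A : Set (Fin h → Fin k)) (i : Fin k) : ℝ :=
  ∑ ω : Fin h → Fin k,
    (A ∩ {ω' | cnt ω' i = maxCnt ω'}).indicator
      (fun ω => (∏ j, p (ω j)) / (numMax ω : ℝ)) ω

/-- The probability that opinion `i` wins the `h`-majority with uniform tie-breaking. -/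
def winPr (k h : ℕ) (p : Fin k → ℝ) (i : Fin k) : ℝ :=
  winPrOn k h p Set.univ i

/-- `W_{i,strict}`: opinion `i` is the unique most sampled opinion. -/
def Wstrict (k h : ℕ) (i : Fin k) : Set (Fin h → Fin k) :=
  {ω | ∀ j, j ≠ i → cnt ω j < cnt ω i}

/-- `W_{i,ties}`: opinion `i` is among the most sampled opinions. -/
def Wties (k h : ℕ) (i : Fin k) : Set (Fin h → Fin k) :=
  {ω | ∀ j, j ≠ i → cnt ω j ≤ cnt ω i}

/-- `W_{1,2,strict}`: opinion `i₁` or opinion `i₂` is the unique most sampled opinion. -/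
def W12strict (k h : ℕ) (i₁ i₂ : Fin k) : Set (Fin h → Fin k) :=
  Wstrict k h i₁ ∪ Wstrict k h i₂

/-- Opinion 1 (as an element of `Fin k`, assuming `2 ≤ k`). -/
def o₁ (k : ℕ) (hk : 2 ≤ k) : Fin k := ⟨0, by omega⟩

/-- Opinion 2 (as an element of `Fin k`, assuming `2 ≤ k`). -/
def o₂ (k : ℕ) (hk : 2 ≤ k) : Fin k := ⟨1, by omega⟩

open Finset

namespace Aux

variable {k h : ℕ}

/-- total weight of a sample. -/
def wt (p : Fin k → ℝ) (ω : Fin h → Fin k) : ℝ := ∏ t, p (ω t)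

lemma wt_nonneg {p : Fin k → ℝ} (hp : ∀ i, 0 ≤ p i) (ω : Fin h → Fin k) : 0 ≤ wt p ω :=
  Finset.prod_nonneg fun t _ => hp (ω t)

lemma cnt_sum (ω : Fin h → Fin k) : ∑ i, cnt ω i = h := by
  classical
  have H := Finset.card_eq_sum_card_fiberwise (s := Finset.univ) (t := Finset.univ)
    (f := ω) (fun t _ => Finset.mem_univ (ω t))
  simpa [cnt] using H.symm

lemma maxCnt_pos (hh : 1 ≤ h) (ω : Fin h → Fin k) : 1 ≤ maxCnt ω := by
  by_contra hcon
  push_neg at hcon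
  have hz : ∀ i, cnt ω i = 0 := by
    intro i
    have := Finset.le_sup (f := cnt ω) (Finset.mem_univ i)
    unfold maxCnt at hcon
    omega
  have := cnt_sum ω
  rw [Finset.sum_congr rfl (fun i _ => hz i)] at this
  simp at this
  omega

lemma numMax_pos (hk : 1 ≤ k) (ω : Fin h → Fin k) : 1 ≤ numMax ω := by
  obtain ⟨i, _, hi⟩ := Finset.exists_mem_eq_sup (Finset.univ : Finset (Fin k))
    ⟨⟨0, hk⟩, Finset.mem_univ _⟩ (cnt ω)
  apply Finset.card_pos.mpr ⟨i, Finset.mem_filter.mpr ⟨Finset.mem_univ _, hi.symm⟩⟩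

lemma wt_eq_prod_pow (p : Fin k → ℝ) (ω : Fin h → Fin k) :
    wt p ω = ∏ i, p i ^ cnt ω i := by
  classical
  unfold wt
  rw [← Finset.prod_fiberwise Finset.univ ω (fun t => p (ω t))]
  apply Finset.prod_congr rfl; intro i _
  rw [Finset.prod_congr rfl (fun t ht => by rw [(Finset.mem_filter.mp ht).2]),
    Finset.prod_const]
  rfl

lemma wt_total {p : Fin k → ℝ} (hps : ∑ i, p i = 1) :
    ∑ ω : Fin h → Fin k, wt p ω = 1 := by
  classical
  have hps' := Finset.prod_univ_sum (fun _ : Fin h => (Finset.univ : Finset (Fin k)))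
    (fun _ i => p i)
  rw [Fintype.piFinset_univ] at hps'
  unfold wt
  rw [← hps']
  rw [Finset.prod_congr rfl (fun t _ => hps), Finset.prod_const, one_pow]

lemma cnt_comp (σ : Equiv.Perm (Fin k)) (ω : Fin h → Fin k) (i : Fin k) :
    cnt (⇑σ ∘ ω) i = cnt ω (σ.symm i) := by
  unfold cnt
  congr 1
  apply Finset.filter_congr
  intro t _
  simp [Equiv.apply_eq_iff_eq_symm_apply]

lemma maxCnt_comp (σ : Equiv.Perm (Fin k)) (ω : Fin h → Fin k) :
    maxCnt (⇑σ ∘ ω) = maxCnt ω := by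
  unfold maxCnt
  apply le_antisymm
  · apply Finset.sup_le; intro i _
    rw [cnt_comp]
    exact Finset.le_sup (Finset.mem_univ _)
  · apply Finset.sup_le; intro i _
    have h1 := Finset.le_sup (f := cnt (⇑σ ∘ ω)) (Finset.mem_univ (σ i))
    rw [cnt_comp] at h1
    simpa using h1

lemma numMax_comp (σ : Equiv.Perm (Fin k)) (ω : Fin h → Fin k) :
    numMax (⇑σ ∘ ω) = numMax ω := by
  unfold numMax
  rw [maxCnt_comp]
  apply Finset.card_nbij' (fun i => σ.symm i) (fun i => σ i)
  · intro a ha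
    simp only [Finset.mem_coe, Finset.mem_filter, Finset.mem_univ, true_and] at ha ⊢
    rw [cnt_comp] at ha
    exact ha
  · intro a ha
    simp only [Finset.mem_coe, Finset.mem_filter, Finset.mem_univ, true_and] at ha ⊢
    rw [cnt_comp]
    simpa using ha
  · intro a _; simp
  · intro a _; simp

lemma sum_comp_perm (σ : Equiv.Perm (Fin k)) (F : (Fin h → Fin k) → ℝ) :
    ∑ ω : Fin h → Fin k, F ω = ∑ ω : Fin h → Fin k, F (⇑σ ∘ ω) := by
  apply Fintype.sum_bijective (fun ω : Fin h → Fin k => ⇑σ.symm ∘ ω)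
  · constructor
    · exact fun ω₁ ω₂ hw => σ.symm.injective.comp_left hw
    · intro ω; exact ⟨⇑σ ∘ ω, by funext t; simp⟩
  · intro ω
    show F ω = F (⇑σ ∘ (⇑σ.symm ∘ ω))
    congr 1; funext t; simp

lemma winPr_eq (p : Fin k → ℝ) (i : Fin k) :
    winPr k h p i = ∑ ω : Fin h → Fin k,
      (if cnt ω i = maxCnt ω then wt p ω / (numMax ω : ℝ) else 0) := by
  classical
  unfold winPr winPrOn wt
  apply Finset.sum_congr rfl
  intro ω _
  rw [Set.univ_inter, Set.indicator_apply]
  simp [Set.mem_setOf_eq]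

lemma winPr_nonneg {p : Fin k → ℝ} (hp : ∀ i, 0 ≤ p i) (i : Fin k) :
    0 ≤ winPr k h p i := by
  rw [winPr_eq]
  apply Finset.sum_nonneg
  intro ω _
  split
  · apply div_nonneg (wt_nonneg hp ω) (Nat.cast_nonneg _)
  · exact le_refl 0

lemma wt_comp (p : Fin k → ℝ) (σ : Equiv.Perm (Fin k)) (ω : Fin h → Fin k) :
    wt p (⇑σ ∘ ω) = wt (p ∘ ⇑σ) ω := rfl

/-- The swap identity: the winning probability of `i` expressed as a sum over
configurations where `i₁` wins. -/
lemma winPr_swap (p : Fin k → ℝ) (i₁ i : Fin k) :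
    winPr k h p i = ∑ ω : Fin h → Fin k,
      (if cnt ω i₁ = maxCnt ω then wt (p ∘ ⇑(Equiv.swap i₁ i)) ω / (numMax ω : ℝ) else 0) := by
  classical
  set σ := Equiv.swap i₁ i with hσ
  rw [winPr_eq, sum_comp_perm σ]
  apply Finset.sum_congr rfl
  intro ω _
  rw [cnt_comp, maxCnt_comp, numMax_comp, wt_comp]
  have hsymm : σ.symm i = i₁ := by
    rw [hσ, Equiv.symm_swap, Equiv.swap_apply_right]
  rw [hsymm]

/-- pointwise weight comparison after a swap, on the event that `i₁` has more samples. -/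
lemma wt_swap_le {p : Fin k → ℝ} (hp : ∀ l, 0 ≤ p l) (i₁ i : Fin k) (hpi : p i ≤ p i₁)
    (ω : Fin h → Fin k) (hc : cnt ω i ≤ cnt ω i₁) :
    wt (p ∘ ⇑(Equiv.swap i₁ i)) ω ≤ wt p ω := by
  classical
  by_cases hii : i = i₁
  · have hps : (p ∘ ⇑(Equiv.swap i₁ i)) = p := by
      subst hii; funext l; simp [Equiv.swap_self]
    rw [hps]
  · rw [wt_eq_prod_pow, wt_eq_prod_pow]
    have hmem1 : i₁ ∈ (Finset.univ : Finset (Fin k)) := Finset.mem_univ _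
    have hmem2 : i ∈ Finset.univ.erase i₁ := Finset.mem_erase.mpr ⟨hii, Finset.mem_univ _⟩
    rw [← Finset.mul_prod_erase _ _ hmem1, ← Finset.mul_prod_erase _ _ hmem2,
      ← Finset.mul_prod_erase _ (fun l => p l ^ cnt ω l) hmem1,
      ← Finset.mul_prod_erase _ (fun l => p l ^ cnt ω l) hmem2]
    have hrest : ∀ l ∈ (Finset.univ.erase i₁).erase i,
        (p ∘ ⇑(Equiv.swap i₁ i)) l ^ cnt ω l = p l ^ cnt ω l := by
      intro l hl
      simp only [Finset.mem_erase] at hl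
      simp only [Function.comp_apply]
      rw [Equiv.swap_apply_of_ne_of_ne hl.2.1 hl.1]
    rw [Finset.prod_congr rfl hrest]
    set R := ∏ l ∈ (Finset.univ.erase i₁).erase i, p l ^ cnt ω l with hR
    have hR0 : 0 ≤ R := Finset.prod_nonneg fun l _ => pow_nonneg (hp l) _
    simp only [Function.comp_apply, Equiv.swap_apply_left, Equiv.swap_apply_right]
    -- goal : p i ^ cnt ω i₁ * (p i₁ ^ cnt ω i * R) ≤ p i₁ ^ cnt ω i₁ * (p i ^ cnt ω i * R)
    have key : p i ^ cnt ω i₁ * p i₁ ^ cnt ω i ≤ p i₁ ^ cnt ω i₁ * p i ^ cnt ω i := by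
      obtain ⟨d, hd⟩ : ∃ d, cnt ω i₁ = cnt ω i + d := ⟨cnt ω i₁ - cnt ω i, by omega⟩
      rw [hd, pow_add, pow_add]
      have hdle : p i ^ d ≤ p i₁ ^ d := pow_le_pow_left₀ (hp i) hpi d
      have hpi0 := hp i
      have hpi1 := hp i₁
      have h1 : 0 ≤ p i ^ cnt ω i * p i₁ ^ cnt ω i := by positivity
      calc p i ^ cnt ω i * p i ^ d * p i₁ ^ cnt ω i
          = (p i ^ cnt ω i * p i₁ ^ cnt ω i) * p i ^ d := by ring
        _ ≤ (p i ^ cnt ω i * p i₁ ^ cnt ω i) * p i₁ ^ d :=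
            mul_le_mul_of_nonneg_left hdle h1
        _ = p i₁ ^ cnt ω i * p i₁ ^ d * p i ^ cnt ω i := by ring
    calc p i ^ cnt ω i₁ * (p i₁ ^ cnt ω i * R)
        = (p i ^ cnt ω i₁ * p i₁ ^ cnt ω i) * R := by ring
      _ ≤ (p i₁ ^ cnt ω i₁ * p i ^ cnt ω i) * R := mul_le_mul_of_nonneg_right key hR0
      _ = p i₁ ^ cnt ω i₁ * (p i ^ cnt ω i * R) := by ring

lemma winPr_le_top {p : Fin k → ℝ} (hp : ∀ l, 0 ≤ p l) (i₁ i : Fin k) (hpi : p i ≤ p i₁) :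
    winPr k h p i ≤ winPr k h p i₁ := by
  classical
  rw [winPr_swap p i₁ i, winPr_eq]
  apply Finset.sum_le_sum
  intro ω _
  by_cases hcond : cnt ω i₁ = maxCnt ω
  · rw [if_pos hcond, if_pos hcond, div_eq_mul_inv, div_eq_mul_inv]
    apply mul_le_mul_of_nonneg_right _ (by positivity)
    apply wt_swap_le hp i₁ i hpi ω
    rw [hcond]
    exact Finset.le_sup (Finset.mem_univ i)
  · rw [if_neg hcond, if_neg hcond]

lemma sum_winPr (hk : 1 ≤ k) {p : Fin k → ℝ} (hps : ∑ i, p i = 1) :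
    ∑ i, winPr k h p i = 1 := by
  classical
  have h1 : ∑ i, winPr k h p i
      = ∑ ω : Fin h → Fin k, ∑ i, (if cnt ω i = maxCnt ω then wt p ω / (numMax ω : ℝ) else 0) := by
    rw [Finset.sum_comm]
    apply Finset.sum_congr rfl
    intro i _
    exact winPr_eq p i
  rw [h1]
  have h2 : ∀ ω : Fin h → Fin k,
      ∑ i, (if cnt ω i = maxCnt ω then wt p ω / (numMax ω : ℝ) else 0) = wt p ω := by
    intro ω
    rw [Finset.sum_ite, Finset.sum_const, Finset.sum_const_zero, add_zero, nsmul_eq_mul]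
    have hnm : ((numMax ω : ℝ)) ≠ 0 := by
      have := numMax_pos hk ω
      positivity
    show (numMax ω : ℝ) * (wt p ω / (numMax ω : ℝ)) = wt p ω
    field_simp
  rw [Finset.sum_congr rfl (fun ω _ => h2 ω)]
  exact wt_total hps

lemma winPr_top_ge (hk : 1 ≤ k) {p : Fin k → ℝ} (hp : ∀ l, 0 ≤ p l) (hps : ∑ i, p i = 1)
    (i₁ : Fin k) (htop : ∀ i, p i ≤ p i₁) :
    1 ≤ (k : ℝ) * winPr k h p i₁ := by
  have h1 : (1:ℝ) = ∑ i, winPr k h p i := (sum_winPr hk hps).symm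
  rw [h1]
  have h2 : ∑ i, winPr k h p i ≤ ∑ _i : Fin k, winPr k h p i₁ :=
    Finset.sum_le_sum fun i _ => winPr_le_top hp i₁ i (htop i)
  simpa using h2

lemma winPr_of_zero (hh : 1 ≤ h) {p : Fin k → ℝ} (i : Fin k) (hpi : p i = 0) :
    winPr k h p i = 0 := by
  classical
  rw [winPr_eq]
  apply Finset.sum_eq_zero
  intro ω _
  by_cases hcond : cnt ω i = maxCnt ω
  · rw [if_pos hcond]
    have hmc : 1 ≤ cnt ω i := by
      have := maxCnt_pos hh ω; omega
    have : ∃ t, ω t = i := by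
      by_contra hcon
      push_neg at hcon
      have : cnt ω i = 0 := by
        unfold cnt
        rw [Finset.card_eq_zero]
        apply Finset.filter_eq_empty_iff.mpr
        intro t _
        exact hcon t
      omega
    obtain ⟨t, ht⟩ := this
    have : wt p ω = 0 := by
      unfold wt
      apply Finset.prod_eq_zero (Finset.mem_univ t)
      rw [ht, hpi]
    rw [this]
    simp
  · rw [if_neg hcond]

/-! ### Fibering over the collapse map -/

/-- Collapse samples of opinion `j` into opinion `i₁`. -/
def collapse (i₁ j : Fin k) (ω : Fin h → Fin k) : Fin h → Fin k :=
  fun t => if ω t = j then i₁ else ω t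

lemma collapse_ne {i₁ j : Fin k} (hij : i₁ ≠ j) (ω : Fin h → Fin k) (t : Fin h) :
    collapse i₁ j ω t ≠ j := by
  unfold collapse
  by_cases hc : ω t = j
  · rw [if_pos hc]; exact hij
  · rw [if_neg hc]; exact hc

section FiberLemmas

variable {i₁ j : Fin k}

lemma cnt_collapse_one {z ω : Fin h → Fin k} (hij : i₁ ≠ j) (hfib : collapse i₁ j ω = z) :
    cnt z i₁ = cnt ω i₁ + cnt ω j := by
  classical
  have hzt : ∀ t, z t = i₁ ↔ (ω t = i₁ ∨ ω t = j) := by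
    intro t
    rw [← hfib]
    unfold collapse
    by_cases hc : ω t = j
    · simp [hc]
    · simp [hc]
  unfold cnt
  rw [Finset.filter_congr (fun t _ => by rw [hzt t] : ∀ t ∈ Finset.univ, (z t = i₁) ↔ (ω t = i₁ ∨ ω t = j))]
  rw [Finset.filter_or]
  rw [Finset.card_union_of_disjoint]
  simp only [Finset.disjoint_left, Finset.mem_filter, Finset.mem_univ, true_and]
  intro t h1 h2
  exact hij (h1 ▸ h2 ▸ rfl)

lemma cnt_collapse_other {z ω : Fin h → Fin k} (hfib : collapse i₁ j ω = z)
    {l : Fin k} (hl1 : l ≠ i₁) (hlj : l ≠ j) : cnt z l = cnt ω l := by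
  classical
  have hzt : ∀ t, z t = l ↔ ω t = l := by
    intro t
    rw [← hfib]
    unfold collapse
    by_cases hc : ω t = j
    · rw [if_pos hc]
      constructor
      · intro hh; exact absurd hh.symm hl1
      · intro hh
        have hjl : j = l := by rw [← hc, hh]
        exact absurd hjl.symm hlj
    · simp [hc]
  unfold cnt
  rw [Finset.filter_congr (fun t _ => by rw [hzt t] : ∀ t ∈ Finset.univ, (z t = l) ↔ (ω t = l))]

end FiberLemmas

/-- the set of the "other" opinions. -/
def Rset (i₁ j : Fin k) : Finset (Fin k) := (Finset.univ.erase i₁).erase j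

/-- max count among other opinions, computed from the collapsed sample. -/
def MrOf (i₁ j : Fin k) (z : Fin h → Fin k) : ℕ := (Rset i₁ j).sup (cnt z)

/-- winning threshold for opinion `i₁` within a fiber. -/
def cthr (i₁ j : Fin k) (z : Fin h → Fin k) : ℕ := max ((cnt z i₁ + 1) / 2) (MrOf i₁ j z)

/-- number of maximizers within a fiber, as a function of `u = cnt ω i₁`. -/
def NzOf (i₁ j : Fin k) (z : Fin h → Fin k) (u : ℕ) : ℕ :=
  1 + (if cnt z i₁ - u = u then 1 else 0)
    + (((Rset i₁ j).filter (fun l => cnt z l = u)).card)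

/-- residual weight of a fiber. -/
def wrOf (p : Fin k → ℝ) (i₁ j : Fin k) (z : Fin h → Fin k) : ℝ :=
  ∏ l ∈ Rset i₁ j, p l ^ cnt z l

lemma univ_eq_insert {i₁ j : Fin k} (hij : i₁ ≠ j) :
    (Finset.univ : Finset (Fin k)) = insert i₁ (insert j (Rset i₁ j)) := by
  unfold Rset
  rw [Finset.insert_erase (Finset.mem_erase.mpr ⟨Ne.symm hij, Finset.mem_univ j⟩),
    Finset.insert_erase (Finset.mem_univ i₁)]

lemma i1_not_mem {i₁ j : Fin k} (hij : i₁ ≠ j) : i₁ ∉ insert j (Rset i₁ j) := by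
  simp [Rset, Finset.mem_insert, Finset.mem_erase, hij]

lemma j_not_mem {i₁ j : Fin k} : j ∉ Rset i₁ j := by simp [Rset]

section FiberLemmas2

variable {i₁ j : Fin k} {z ω : Fin h → Fin k}

lemma maxCnt_fiber (hij : i₁ ≠ j) (hfib : collapse i₁ j ω = z) :
    maxCnt ω = max (cnt ω i₁) (max (cnt z i₁ - cnt ω i₁) (MrOf i₁ j z)) := by
  classical
  have hcj : cnt ω j = cnt z i₁ - cnt ω i₁ := by
    have := cnt_collapse_one hij hfib; omega
  unfold maxCnt
  rw [univ_eq_insert hij (k := k), Finset.sup_insert, Finset.sup_insert]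
  have hR : (Rset i₁ j).sup (cnt ω) = MrOf i₁ j z := by
    unfold MrOf
    apply Finset.sup_congr rfl
    intro l hl
    simp only [Rset, Finset.mem_erase] at hl
    exact (cnt_collapse_other hfib hl.2.1 hl.1).symm
  rw [hR, hcj]

lemma cnt_le_fiber (hij : i₁ ≠ j) (hfib : collapse i₁ j ω = z) : cnt ω i₁ ≤ cnt z i₁ := by
  have := cnt_collapse_one hij hfib; omega

lemma win_iff_fiber (hij : i₁ ≠ j) (hfib : collapse i₁ j ω = z) :
    (cnt ω i₁ = maxCnt ω) ↔ cthr i₁ j z ≤ cnt ω i₁ := by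
  classical
  rw [maxCnt_fiber hij hfib]
  have hum := cnt_le_fiber hij hfib
  set u := cnt ω i₁
  set m := cnt z i₁
  set M := MrOf i₁ j z
  unfold cthr
  constructor
  · intro hmax
    have h1 : max (m - u) M ≤ u := by
      by_contra hcon
      push_neg at hcon
      have : u < max u (max (m - u) M) := lt_max_of_lt_right hcon
      omega
    have h2 : m - u ≤ u := le_trans (le_max_left _ _) h1
    have h3 : M ≤ u := le_trans (le_max_right _ _) h1
    apply max_le _ h3
    omega
  · intro hc
    have h2 : (m + 1) / 2 ≤ u := le_trans (le_max_left _ _) hc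
    have h3 : M ≤ u := le_trans (le_max_right _ _) hc
    have h4 : m - u ≤ u := by omega
    rw [max_eq_left (max_le h4 h3)]

lemma numMax_fiber (hij : i₁ ≠ j) (hfib : collapse i₁ j ω = z) (hwin : cnt ω i₁ = maxCnt ω) :
    numMax ω = NzOf i₁ j z (cnt ω i₁) := by
  classical
  have hcj : cnt ω j = cnt z i₁ - cnt ω i₁ := by
    have := cnt_collapse_one hij hfib; omega
  set u := cnt ω i₁ with hu
  unfold numMax
  rw [← hwin]
  rw [show (Finset.univ : Finset (Fin k)) = insert i₁ (insert j (Rset i₁ j)) from univ_eq_insert hij]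
  rw [Finset.filter_insert, if_pos rfl, Finset.filter_insert]
  have hcard2 : ((Rset i₁ j).filter (fun l => cnt ω l = u)).card
      = ((Rset i₁ j).filter (fun l => cnt z l = u)).card := by
    congr 1
    apply Finset.filter_congr
    intro l hl
    simp only [Rset, Finset.mem_erase] at hl
    rw [cnt_collapse_other hfib hl.2.1 hl.1]
  by_cases hj : cnt ω j = u
  · rw [if_pos hj]
    rw [Finset.card_insert_of_notMem, Finset.card_insert_of_notMem]
    · unfold NzOf
      rw [if_pos (by omega : cnt z i₁ - u = u), hcard2]
      omega
    · intro hmem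
      have := Finset.mem_of_mem_filter j hmem
      exact j_not_mem (i₁ := i₁) (j := j) this
    · intro hmem
      simp only [Finset.mem_insert] at hmem
      rcases hmem with h1 | h2
      · exact hij h1
      · have := Finset.mem_of_mem_filter i₁ h2
        simp [Rset, Finset.mem_erase] at this
  · rw [if_neg hj]
    rw [Finset.card_insert_of_notMem]
    · unfold NzOf
      rw [if_neg (by omega : ¬(cnt z i₁ - u = u)), hcard2]
      omega
    · intro hmem
      have := Finset.mem_of_mem_filter i₁ hmem
      simp [Rset, Finset.mem_erase] at this

lemma wt_fiber (hij : i₁ ≠ j) (hfib : collapse i₁ j ω = z) (p : Fin k → ℝ) :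
    wt p ω = p i₁ ^ cnt ω i₁ * p j ^ (cnt z i₁ - cnt ω i₁) * wrOf p i₁ j z := by
  classical
  have hcj : cnt ω j = cnt z i₁ - cnt ω i₁ := by
    have := cnt_collapse_one hij hfib; omega
  rw [wt_eq_prod_pow]
  rw [show (Finset.univ : Finset (Fin k)) = insert i₁ (insert j (Rset i₁ j)) from univ_eq_insert hij]
  rw [Finset.prod_insert (i1_not_mem hij), Finset.prod_insert (j_not_mem (i₁ := i₁))]
  have hRR : ∏ l ∈ Rset i₁ j, p l ^ cnt ω l = wrOf p i₁ j z := by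
    unfold wrOf
    apply Finset.prod_congr rfl
    intro l hl
    simp only [Rset, Finset.mem_erase] at hl
    rw [cnt_collapse_other hfib hl.2.1 hl.1]
  rw [hRR, hcj]
  ring

lemma wt_swap_fiber (hij : i₁ ≠ j) (hfib : collapse i₁ j ω = z) (p : Fin k → ℝ) :
    wt (p ∘ ⇑(Equiv.swap i₁ j)) ω
      = p j ^ cnt ω i₁ * p i₁ ^ (cnt z i₁ - cnt ω i₁) * wrOf p i₁ j z := by
  classical
  have hcj : cnt ω j = cnt z i₁ - cnt ω i₁ := by
    have := cnt_collapse_one hij hfib; omega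
  rw [wt_eq_prod_pow]
  rw [show (Finset.univ : Finset (Fin k)) = insert i₁ (insert j (Rset i₁ j)) from univ_eq_insert hij]
  rw [Finset.prod_insert (i1_not_mem hij), Finset.prod_insert (j_not_mem (i₁ := i₁))]
  have hRR : ∏ l ∈ Rset i₁ j, (p ∘ ⇑(Equiv.swap i₁ j)) l ^ cnt ω l = wrOf p i₁ j z := by
    unfold wrOf
    apply Finset.prod_congr rfl
    intro l hl
    simp only [Rset, Finset.mem_erase] at hl
    simp only [Function.comp_apply]
    rw [Equiv.swap_apply_of_ne_of_ne hl.2.1 hl.1, cnt_collapse_other hfib hl.2.1 hl.1]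
  rw [hRR, hcj]
  simp only [Function.comp_apply, Equiv.swap_apply_left, Equiv.swap_apply_right]
  ring

end FiberLemmas2

/-- number of fiber elements with a given count. -/
lemma card_fiber_cnt {i₁ j : Fin k} (hij : i₁ ≠ j) (z : Fin h → Fin k) (hzj : ∀ t, z t ≠ j) {u : ℕ}
    (hu : u ≤ cnt z i₁) :
    (Finset.univ.filter
        (fun ω : Fin h → Fin k => collapse i₁ j ω = z ∧ cnt ω i₁ = u)).card
      = (cnt z i₁).choose u := by
  classical
  set m := cnt z i₁ with hm
  set A := Finset.univ.filter (fun t : Fin h => z t = i₁) with hA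
  have hAcard : A.card = m := rfl
  have key : (Finset.univ.filter
        (fun ω : Fin h → Fin k => collapse i₁ j ω = z ∧ cnt ω i₁ = u)).card
      = (A.powersetCard (m - u)).card := by
    apply Finset.card_nbij' (fun ω => Finset.univ.filter (fun t => ω t = j))
      (fun s => fun t => if t ∈ s then j else z t)
    · -- forward maps into powersetCard
      intro ω hω
      simp only [Finset.mem_coe, Finset.mem_filter, Finset.mem_univ, true_and] at hω
      obtain ⟨hfib, hcnt⟩ := hω
      rw [Finset.mem_coe, Finset.mem_powersetCard]
      constructor
      · intro t ht
        simp only [Finset.mem_filter, Finset.mem_univ, true_and] at ht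
        rw [hA]
        simp only [Finset.mem_filter, Finset.mem_univ, true_and]
        rw [← hfib]
        show (if ω t = j then i₁ else ω t) = i₁
        rw [if_pos ht]
      · have h1 := cnt_collapse_one hij hfib
        show cnt ω j = m - u
        omega
    · -- backward maps into the fiber
      intro s hs
      rw [Finset.mem_coe, Finset.mem_powersetCard] at hs
      obtain ⟨hsub, hcard⟩ := hs
      simp only [Finset.mem_coe, Finset.mem_filter, Finset.mem_univ, true_and]
      constructor
      · funext t
        show (if (if t ∈ s then j else z t) = j then i₁ else (if t ∈ s then j else z t)) = z t
        by_cases hts : t ∈ s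
        · rw [if_pos hts, if_pos rfl]
          have hmem := hsub hts
          rw [hA] at hmem
          simp only [Finset.mem_filter, Finset.mem_univ, true_and] at hmem
          exact hmem.symm
        · rw [if_neg hts, if_neg (hzj t)]
      · have hfilter : Finset.univ.filter (fun t => (if t ∈ s then j else z t) = i₁) = A \ s := by
          ext t
          simp only [Finset.mem_filter, Finset.mem_univ, true_and, Finset.mem_sdiff]
          by_cases hts : t ∈ s
          · simp only [if_pos hts]
            constructor
            · intro hh; exact absurd hh (Ne.symm hij)
            · intro hh; exact absurd hts hh.2
          · simp only [if_neg hts]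
            rw [hA]
            simp only [Finset.mem_filter, Finset.mem_univ, true_and]
            tauto
        show (Finset.univ.filter (fun t => (if t ∈ s then j else z t) = i₁)).card = u
        rw [hfilter, Finset.card_sdiff_of_subset hsub, hAcard, hcard]
        omega
    · -- left inverse
      intro ω hω
      simp only [Finset.mem_coe, Finset.mem_filter, Finset.mem_univ, true_and] at hω
      obtain ⟨hfib, _⟩ := hω
      funext t
      show (if t ∈ Finset.univ.filter (fun t => ω t = j) then j else z t) = ω t
      by_cases htj : ω t = j
      · rw [if_pos (Finset.mem_filter.mpr ⟨Finset.mem_univ t, htj⟩), htj]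
      · have hnotmem : t ∉ Finset.univ.filter (fun t => ω t = j) :=
          fun hmem => htj (Finset.mem_filter.mp hmem).2
        rw [if_neg hnotmem, ← hfib]
        show (if ω t = j then i₁ else ω t) = ω t
        rw [if_neg htj]
    · -- right inverse
      intro s hs
      ext t
      simp only [Finset.mem_filter, Finset.mem_univ, true_and]
      by_cases hts : t ∈ s
      · simp [if_pos hts, hts]
      · simp [if_neg hts, hts, hzj t]
  rw [key, Finset.card_powersetCard, hAcard, Nat.choose_symm hu]

/-- fiber sums reduce to binomial sums. -/
lemma sum_fiber {i₁ j : Fin k} (hij : i₁ ≠ j) (z : Fin h → Fin k) (hzj : ∀ t, z t ≠ j) (G : ℕ → ℝ) :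
    ∑ ω ∈ Finset.univ.filter (fun ω : Fin h → Fin k => collapse i₁ j ω = z), G (cnt ω i₁)
      = ∑ u ∈ Finset.range (cnt z i₁ + 1), ((cnt z i₁).choose u : ℝ) * G u := by
  classical
  set m := cnt z i₁ with hm
  have hmaps : ∀ ω ∈ Finset.univ.filter (fun ω : Fin h → Fin k => collapse i₁ j ω = z),
      cnt ω i₁ ∈ Finset.range (m + 1) := by
    intro ω hω
    simp only [Finset.mem_filter, Finset.mem_univ, true_and] at hω
    have := cnt_collapse_one hij hω
    rw [Finset.mem_range]
    omega
  rw [← Finset.sum_fiberwise_of_maps_to hmaps (fun ω => G (cnt ω i₁))]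
  apply Finset.sum_congr rfl
  intro u hu
  rw [Finset.mem_range] at hu
  have hcongr : ∑ ω ∈ (Finset.univ.filter
          (fun ω : Fin h → Fin k => collapse i₁ j ω = z)).filter (fun ω => cnt ω i₁ = u),
        G (cnt ω i₁)
      = ∑ ω ∈ (Finset.univ.filter
          (fun ω : Fin h → Fin k => collapse i₁ j ω = z)).filter (fun ω => cnt ω i₁ = u), G u := by
    apply Finset.sum_congr rfl
    intro ω hω
    rw [(Finset.mem_filter.mp hω).2]
  rw [hcongr, Finset.sum_const, Finset.filter_filter]
  rw [card_fiber_cnt hij z hzj (by omega : u ≤ m)]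
  rw [nsmul_eq_mul]

/-! ### Slice (binomial) machinery -/


/-- swap-exponent inequality: putting the larger exponent on the larger base. -/
lemma base_swap {α β : ℝ} (hb : 0 ≤ β) (hba : β ≤ α) {s s' : ℕ} (hss : s ≤ s') :
    β ^ s' * α ^ s ≤ α ^ s' * β ^ s := by
  have ha : 0 ≤ α := hb.trans hba
  obtain ⟨d, rfl⟩ : ∃ d, s' = s + d := ⟨s' - s, by omega⟩
  have hd : β ^ d ≤ α ^ d := pow_le_pow_left₀ hb hba d
  calc β ^ (s + d) * α ^ s = (β ^ d) * (β ^ s * α ^ s) := by rw [pow_add]; ring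
    _ ≤ (α ^ d) * (β ^ s * α ^ s) := by
        apply mul_le_mul_of_nonneg_right hd (by positivity)
    _ = α ^ (s + d) * β ^ s := by rw [pow_add]; ring

/-- Chernoff-type termwise bound. -/
lemma pow_term_le {α β : ℝ} (hb : 0 ≤ β) (hba : β ≤ α) {u m : ℕ} (hu : m ≤ 2 * u)
    (hum : u ≤ m) : β ^ u * α ^ (m - u) ≤ Real.sqrt (α * β) ^ m := by
  have ha : 0 ≤ α := hb.trans hba
  set a := Real.sqrt α with hadef
  set b := Real.sqrt β with hbdef
  have ha2 : a ^ 2 = α := Real.sq_sqrt ha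
  have hb2 : b ^ 2 = β := Real.sq_sqrt hb
  have hab : Real.sqrt (α * β) = a * b := Real.sqrt_mul ha β
  have hb0 : 0 ≤ b := Real.sqrt_nonneg _
  have ha0 : 0 ≤ a := Real.sqrt_nonneg _
  have hba' : b ≤ a := Real.sqrt_le_sqrt hba
  rw [hab, ← ha2, ← hb2, ← pow_mul, ← pow_mul, mul_pow]
  set e := 2 * u - m with hedef
  have h1 : 2 * u = m + e := by omega
  have h2 : 2 * (m - u) = m - e := by omega
  have he : e ≤ m := by omega
  rw [h1, h2]
  have hd : b ^ e ≤ a ^ e := pow_le_pow_left₀ hb0 hba' e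
  calc b ^ (m + e) * a ^ (m - e) = b ^ e * (b ^ m * a ^ (m - e)) := by rw [pow_add]; ring
    _ ≤ a ^ e * (b ^ m * a ^ (m - e)) := by
        apply mul_le_mul_of_nonneg_right hd (by positivity)
    _ = a ^ m * b ^ m := by
        have hmm : a ^ m = a ^ (m - e) * a ^ e := by rw [← pow_add]; congr 1; omega
        rw [hmm]; ring

variable (α β : ℝ) (m : ℕ)

/-- lower-tail binomial sum (weight β on successes). -/
def Sq (t : ℕ) : ℝ := ∑ u ∈ Icc t m, (m.choose u : ℝ) * (β ^ u * α ^ (m - u))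

/-- upper binomial sum (weight α on successes). -/
def Sp (t : ℕ) : ℝ := ∑ u ∈ Icc t m, (m.choose u : ℝ) * (α ^ u * β ^ (m - u))

lemma Sq_nonneg (hb : 0 ≤ β) (hba : β ≤ α) (t : ℕ) : 0 ≤ Sq α β m t := by
  apply Finset.sum_nonneg; intro u _
  have ha : 0 ≤ α := hb.trans hba
  positivity

lemma Sp_nonneg (hb : 0 ≤ β) (hba : β ≤ α) (t : ℕ) : 0 ≤ Sp α β m t := by
  apply Finset.sum_nonneg; intro u _
  have ha : 0 ≤ α := hb.trans hba
  positivity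

lemma Sp_pos (ha : 0 < α) (hb : 0 ≤ β) (hba : β ≤ α) {t : ℕ} (ht : t ≤ m) :
    0 < Sp α β m t := by
  have hmem : m ∈ Icc t m := by simp [Finset.mem_Icc, ht]
  have h1 : (0:ℝ) < (m.choose m : ℝ) * (α ^ m * β ^ (m - m)) := by
    simp [Nat.choose_self]
    positivity
  apply lt_of_lt_of_le h1
  apply Finset.single_le_sum (f := fun u => (m.choose u : ℝ) * (α ^ u * β ^ (m - u))) _ hmem
  intro u _
  have ha' : (0:ℝ) ≤ α := le_of_lt ha
  positivity

lemma Sq_split {t : ℕ} (ht : t ≤ m) :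
    Sq α β m t = (m.choose t : ℝ) * (β ^ t * α ^ (m - t)) + Sq α β m (t + 1) := by
  unfold Sq
  rw [show Icc t m = insert t (Icc (t + 1) m) by ext x; simp [Finset.mem_Icc]; omega,
    Finset.sum_insert (by simp [Finset.mem_Icc])]

lemma Sp_split {t : ℕ} (ht : t ≤ m) :
    Sp α β m t = (m.choose t : ℝ) * (α ^ t * β ^ (m - t)) + Sp α β m (t + 1) := by
  unfold Sp
  rw [show Icc t m = insert t (Icc (t + 1) m) by ext x; simp [Finset.mem_Icc]; omega,
    Finset.sum_insert (by simp [Finset.mem_Icc])]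

lemma Sq_empty {t : ℕ} (ht : m < t) : Sq α β m t = 0 := by
  unfold Sq
  rw [Finset.Icc_eq_empty (by omega), Finset.sum_empty]

lemma Sp_empty {t : ℕ} (ht : m < t) : Sp α β m t = 0 := by
  unfold Sp
  rw [Finset.Icc_eq_empty (by omega), Finset.sum_empty]

/-- half of the total mass sits at or above the midpoint. -/
lemma half_le_Sp (hb : 0 ≤ β) (hba : β ≤ α) :
    (α + β) ^ m ≤ 2 * Sp α β m ((m + 1) / 2) := by
  have ha : 0 ≤ α := hb.trans hba
  set t0 := (m + 1) / 2 with ht0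
  have hadd : (α + β) ^ m = ∑ u ∈ range (m + 1), α ^ u * β ^ (m - u) * (m.choose u : ℝ) :=
    add_pow α β m
  have hsplit : range (m + 1) = range t0 ∪ Icc t0 m := by
    ext x; simp [Finset.mem_Icc, Finset.mem_range]; omega
  have hdisj : Disjoint (range t0) (Icc t0 m) := by
    simp [Finset.disjoint_left, Finset.mem_Icc, Finset.mem_range]
    intro a ha1 ha2; omega
  rw [hadd, hsplit, Finset.sum_union hdisj]
  have h1 : ∑ u ∈ range t0, α ^ u * β ^ (m - u) * (m.choose u : ℝ) ≤ Sp α β m t0 := by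
    have hle : ∑ u ∈ range t0, α ^ u * β ^ (m - u) * (m.choose u : ℝ)
        ≤ ∑ u ∈ range t0, α ^ (m - u) * β ^ u * (m.choose u : ℝ) := by
      apply Finset.sum_le_sum; intro u hu
      have hu' : u < t0 := Finset.mem_range.mp hu
      have h2u : u ≤ m - u := by omega
      have hsw := base_swap hb hba (s := u) (s' := m - u) h2u
      -- hsw : β ^ (m-u) * α ^ u ≤ α ^ (m-u) * β ^ u
      have : α ^ u * β ^ (m - u) ≤ α ^ (m - u) * β ^ u := by nlinarith [hsw]
      apply mul_le_mul_of_nonneg_right this (by positivity)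
    apply hle.trans
    -- reindex u ↦ m - u
    have hre : ∑ u ∈ range t0, α ^ (m - u) * β ^ u * (m.choose u : ℝ)
        = ∑ v ∈ (range t0).image (fun u => m - u), α ^ v * β ^ (m - v) * (m.choose v : ℝ) := by
      rw [Finset.sum_image]
      · apply Finset.sum_congr rfl; intro u hu
        have hu' : u < t0 := Finset.mem_range.mp hu
        have h1 : m - (m - u) = u := by omega
        rw [h1, Nat.choose_symm (by omega)]
      · intro a ha' b hb' hab
        have : a < t0 := Finset.mem_range.mp ha'
        have : b < t0 := Finset.mem_range.mp hb'
        have hab' : m - a = m - b := hab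
        omega
    rw [hre]
    unfold Sp
    have hcongr : ∑ v ∈ (range t0).image (fun u => m - u), α ^ v * β ^ (m - v) * (m.choose v : ℝ)
        = ∑ v ∈ (range t0).image (fun u => m - u), (m.choose v : ℝ) * (α ^ v * β ^ (m - v)) := by
      apply Finset.sum_congr rfl; intro v _; ring
    rw [hcongr]
    apply Finset.sum_le_sum_of_subset_of_nonneg
    · intro v hv
      simp only [Finset.mem_image, Finset.mem_range] at hv
      obtain ⟨u, hu, rfl⟩ := hv
      simp only [Finset.mem_Icc]; omega
    · intro v _ _; positivity
  have h2 : ∑ u ∈ Icc t0 m, α ^ u * β ^ (m - u) * (m.choose u : ℝ) = Sp α β m t0 := by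
    unfold Sp; apply Finset.sum_congr rfl; intro u _; ring
  rw [h2]
  linarith [h1]

/-- Chernoff at the midpoint. -/
lemma Sq_midpoint_le (hb : 0 ≤ β) (hba : β ≤ α) :
    Sq α β m ((m + 1) / 2) ≤ (2 * Real.sqrt (α * β)) ^ m := by
  have ha : 0 ≤ α := hb.trans hba
  set t0 := (m + 1) / 2 with ht0
  have h1 : Sq α β m t0 ≤ ∑ u ∈ Icc t0 m, (m.choose u : ℝ) * Real.sqrt (α * β) ^ m := by
    apply Finset.sum_le_sum; intro u hu
    simp only [Finset.mem_Icc] at hu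
    apply mul_le_mul_of_nonneg_left _ (by positivity)
    exact pow_term_le hb hba (by omega) hu.2
  apply h1.trans
  rw [← Finset.sum_mul]
  rw [mul_pow]
  apply mul_le_mul_of_nonneg_right _ (by positivity)
  have h2 : ∑ u ∈ Icc t0 m, (m.choose u : ℝ) ≤ ∑ u ∈ range (m + 1), (m.choose u : ℝ) := by
    apply Finset.sum_le_sum_of_subset_of_nonneg
    · intro x hx; simp only [Finset.mem_Icc] at hx; simp only [Finset.mem_range]; omega
    · intro _ _ _; positivity
  apply h2.trans
  rw [← Nat.cast_sum]
  rw [Nat.sum_range_choose]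
  simp

/-- tail-ratio bound propagated upward. -/
lemma tail_ratio (ha : 0 < α) (hb : 0 ≤ β) (hba : β ≤ α) :
    ∀ t, (m + 1) / 2 ≤ t →
      (α + β) ^ m * Sq α β m t ≤ (2 * (2 * Real.sqrt (α * β)) ^ m) * Sp α β m t := by
  have ha' : (0:ℝ) ≤ α := le_of_lt ha
  set t0 := (m + 1) / 2 with ht0
  set KK := 2 * (2 * Real.sqrt (α * β)) ^ m with hKK
  intro t ht
  induction t, ht using Nat.le_induction with
  | base =>
    calc (α + β) ^ m * Sq α β m t0 ≤ (α + β) ^ m * (2 * Real.sqrt (α * β)) ^ m := by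
          apply mul_le_mul_of_nonneg_left (Sq_midpoint_le α β m hb hba) (by positivity)
      _ = (2 * Real.sqrt (α * β)) ^ m * (α + β) ^ m := by ring
      _ ≤ (2 * Real.sqrt (α * β)) ^ m * (2 * Sp α β m t0) := by
          apply mul_le_mul_of_nonneg_left (half_le_Sp α β m hb hba) (by positivity)
      _ = KK * Sp α β m t0 := by rw [hKK]; ring
  | succ t ht IH =>
    by_cases htm : m < t + 1
    · rw [Sq_empty α β m htm]
      have := Sp_nonneg α β m hb hba (t + 1)
      have hKK0 : 0 ≤ KK := by positivity
      nlinarith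
    · push_neg at htm
      have htm' : t ≤ m := by omega
      have hSpt : 0 < Sp α β m t := Sp_pos α β m ha hb hba htm'
      -- cross inequality: Sq (t+1) * gπ t ≤ gq t * Sp (t+1)
      have hcross : Sq α β m (t + 1) * ((m.choose t : ℝ) * (α ^ t * β ^ (m - t)))
          ≤ ((m.choose t : ℝ) * (β ^ t * α ^ (m - t))) * Sp α β m (t + 1) := by
        unfold Sq Sp
        rw [Finset.sum_mul, Finset.mul_sum]
        apply Finset.sum_le_sum; intro u hu
        simp only [Finset.mem_Icc] at hu
        have hut : t + 1 ≤ u := hu.1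
        have hum : u ≤ m := hu.2
        have hs : t + (m - u) ≤ u + (m - t) := by omega
        have hsw := base_swap hb hba hs
        -- β ^ (u + (m-t)) * α ^ (t + (m-u)) ≤ α ^ (u + (m-t)) * β ^ (t + (m-u))
        have key : (β ^ u * α ^ (m - u)) * (α ^ t * β ^ (m - t))
            ≤ (β ^ t * α ^ (m - t)) * (α ^ u * β ^ (m - u)) := by
          have e1 : (β ^ u * α ^ (m - u)) * (α ^ t * β ^ (m - t))
              = β ^ (u + (m - t)) * α ^ (t + (m - u)) := by rw [pow_add, pow_add]; ring
          have e2 : (β ^ t * α ^ (m - t)) * (α ^ u * β ^ (m - u))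
              = α ^ (u + (m - t)) * β ^ (t + (m - u)) := by rw [pow_add, pow_add]; ring
          rw [e1, e2]; exact hsw
        calc (m.choose u : ℝ) * (β ^ u * α ^ (m - u)) * ((m.choose t : ℝ) * (α ^ t * β ^ (m - t)))
            = ((m.choose u : ℝ) * (m.choose t : ℝ)) * ((β ^ u * α ^ (m - u)) * (α ^ t * β ^ (m - t))) := by ring
          _ ≤ ((m.choose u : ℝ) * (m.choose t : ℝ)) * ((β ^ t * α ^ (m - t)) * (α ^ u * β ^ (m - u))) := by
              apply mul_le_mul_of_nonneg_left key (by positivity)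
          _ = (m.choose t : ℝ) * (β ^ t * α ^ (m - t)) * ((m.choose u : ℝ) * (α ^ u * β ^ (m - u))) := by ring
      -- Sq(t+1) * Sp t ≤ Sq t * Sp (t+1)
      have hmono : Sq α β m (t + 1) * Sp α β m t ≤ Sq α β m t * Sp α β m (t + 1) := by
        rw [Sq_split α β m htm', Sp_split α β m htm']
        have h0 : 0 ≤ Sq α β m (t+1) * Sp α β m (t+1) := by
          have := Sq_nonneg α β m hb hba (t+1); have := Sp_nonneg α β m hb hba (t+1); positivity
        nlinarith [hcross]
      -- conclude
      have step : ((α + β) ^ m * Sq α β m (t + 1)) * Sp α β m t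
          ≤ (KK * Sp α β m (t + 1)) * Sp α β m t := by
        have h1 : ((α + β) ^ m * Sq α β m (t + 1)) * Sp α β m t
            = (α + β) ^ m * (Sq α β m (t + 1) * Sp α β m t) := by ring
        have h2 : (α + β) ^ m * (Sq α β m (t + 1) * Sp α β m t)
            ≤ (α + β) ^ m * (Sq α β m t * Sp α β m (t + 1)) := by
          apply mul_le_mul_of_nonneg_left hmono (by positivity)
        have h3 : (α + β) ^ m * (Sq α β m t * Sp α β m (t + 1))
            = ((α + β) ^ m * Sq α β m t) * Sp α β m (t + 1) := by ring
        have h4 : ((α + β) ^ m * Sq α β m t) * Sp α β m (t + 1)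
            ≤ (KK * Sp α β m t) * Sp α β m (t + 1) := by
          apply mul_le_mul_of_nonneg_right IH (Sp_nonneg α β m hb hba (t+1))
        calc ((α + β) ^ m * Sq α β m (t + 1)) * Sp α β m t
            = (α + β) ^ m * (Sq α β m (t + 1) * Sp α β m t) := h1
          _ ≤ (α + β) ^ m * (Sq α β m t * Sp α β m (t + 1)) := h2
          _ = ((α + β) ^ m * Sq α β m t) * Sp α β m (t + 1) := h3
          _ ≤ (KK * Sp α β m t) * Sp α β m (t + 1) := h4
          _ = (KK * Sp α β m (t + 1)) * Sp α β m t := by ring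
      exact le_of_mul_le_mul_right step hSpt

/-- The main slice (per-fiber) inequality with a two-valued tie-breaking weight φ. -/
lemma slice_main (ha : 0 < α) (hb : 0 ≤ β) (hba : β ≤ α) (c : ℕ) (hc : m ≤ 2 * c)
    (φ : ℕ → ℝ) (hφ0 : ∀ u, 0 ≤ φ u) (hφ1 : φ c ≤ 1) (hφtop : ∀ u, c < u → φ u = 1) :
    (α + β) ^ m * (∑ u ∈ Icc c m, (m.choose u : ℝ) * (β ^ u * α ^ (m - u)) * φ u)
      ≤ (2 * (2 * Real.sqrt (α * β)) ^ m)
        * (∑ u ∈ Icc c m, (m.choose u : ℝ) * (α ^ u * β ^ (m - u)) * φ u) := by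
  have ha' : (0:ℝ) ≤ α := le_of_lt ha
  set t0 := (m + 1) / 2 with ht0
  have ht0c : t0 ≤ c := by omega
  by_cases hcm : m < c
  · rw [Finset.Icc_eq_empty (by omega), Finset.sum_empty, Finset.sum_empty]
    simp
  · push_neg at hcm
    -- split the φ-weighted sums
    have hsplitL : ∑ u ∈ Icc c m, (m.choose u : ℝ) * (β ^ u * α ^ (m - u)) * φ u
        = φ c * Sq α β m c + (1 - φ c) * Sq α β m (c + 1) := by
      rw [show Icc c m = insert c (Icc (c + 1) m) by ext x; simp [Finset.mem_Icc]; omega,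
        Finset.sum_insert (by simp [Finset.mem_Icc])]
      have htail : ∑ u ∈ Icc (c + 1) m, (m.choose u : ℝ) * (β ^ u * α ^ (m - u)) * φ u
          = Sq α β m (c + 1) := by
        unfold Sq; apply Finset.sum_congr rfl; intro u hu
        simp only [Finset.mem_Icc] at hu
        rw [hφtop u (by omega)]; ring
      rw [htail, Sq_split α β m hcm]; ring
    have hsplitR : ∑ u ∈ Icc c m, (m.choose u : ℝ) * (α ^ u * β ^ (m - u)) * φ u
        = φ c * Sp α β m c + (1 - φ c) * Sp α β m (c + 1) := by
      rw [show Icc c m = insert c (Icc (c + 1) m) by ext x; simp [Finset.mem_Icc]; omega,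
        Finset.sum_insert (by simp [Finset.mem_Icc])]
      have htail : ∑ u ∈ Icc (c + 1) m, (m.choose u : ℝ) * (α ^ u * β ^ (m - u)) * φ u
          = Sp α β m (c + 1) := by
        unfold Sp; apply Finset.sum_congr rfl; intro u hu
        simp only [Finset.mem_Icc] at hu
        rw [hφtop u (by omega)]; ring
      rw [htail, Sp_split α β m hcm]; ring
    rw [hsplitL, hsplitR]
    have h1 := tail_ratio α β m ha hb hba c ht0c
    have h2 := tail_ratio α β m ha hb hba (c + 1) (by omega)
    have hφc := hφ0 c
    have hφc1 : 0 ≤ 1 - φ c := by linarith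
    nlinarith [mul_le_mul_of_nonneg_left h1 hφc, mul_le_mul_of_nonneg_left h2 hφc1]


/-! ### Numeric constants -/


lemma exp_45 : Real.exp (4/5 : ℝ) ≥ 200/91 := by
  have h5 : Real.exp (4/5 : ℝ) ^ (5:ℕ) = Real.exp 1 ^ (4:ℕ) := by
    rw [← Real.exp_nat_mul, ← Real.exp_nat_mul]; norm_num
  have he := Real.exp_one_gt_d9
  have hpos : (0:ℝ) < Real.exp (4/5 : ℝ) := Real.exp_pos _
  by_contra hcon
  push_neg at hcon
  have h1 : Real.exp (4/5 : ℝ) ^ (5:ℕ) < (200/91 : ℝ) ^ (5:ℕ) := by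
    apply pow_lt_pow_left₀ hcon (le_of_lt hpos) (by norm_num)
  rw [h5] at h1
  have h2 : (2.7182818283 : ℝ) ^ (4:ℕ) < Real.exp 1 ^ (4:ℕ) := by
    apply pow_lt_pow_left₀ he (by norm_num) (by norm_num)
  have : (2.7182818283 : ℝ) ^ (4:ℕ) < (200/91 : ℝ) ^ (5:ℕ) := lt_trans h2 h1
  norm_num at this

lemma exp_15 : Real.exp ((1:ℝ)/5) ≥ 50/41 := by
  have h5 : Real.exp ((1:ℝ)/5) ^ (5:ℕ) = Real.exp 1 := by
    rw [← Real.exp_nat_mul]; norm_num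
  have he := Real.exp_one_gt_d9
  have hpos : (0:ℝ) < Real.exp ((1:ℝ)/5) := Real.exp_pos _
  by_contra hcon
  push_neg at hcon
  have h1 : Real.exp ((1:ℝ)/5) ^ (5:ℕ) < (50/41 : ℝ) ^ (5:ℕ) := by
    apply pow_lt_pow_left₀ hcon (le_of_lt hpos) (by norm_num)
  rw [h5] at h1
  have : (2.7182818283 : ℝ) < (50/41 : ℝ) ^ (5:ℕ) := lt_trans he h1
  norm_num at this

/-- The key constant bound: on "good" slices the ratio is at most 91/100. -/
lemma goodK {α β : ℝ} {h : ℕ} {m : ℕ} (hb : 0 < β) (hba : β ≤ α)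
    (hgap : 2 * (α + β) ≤ (h:ℝ) * (α - β)^2)
    (hm : (4:ℝ)/5 * ((h:ℝ) * (α + β)) ≤ (m:ℕ)) :
    2 * (2 * Real.sqrt (α * β)) ^ m ≤ (91/100 : ℝ) * (α + β) ^ m := by
  have ha : 0 < α := lt_of_lt_of_le hb hba
  set S := α + β with hS
  have hSpos : 0 < S := by positivity
  set r : ℝ := 2 * Real.sqrt (α * β) / S with hr
  have hsq : Real.sqrt (α * β) ^ 2 = α * β := Real.sq_sqrt (by positivity)
  have hrpos : 0 < r := by
    have : 0 < Real.sqrt (α * β) := Real.sqrt_pos.mpr (by positivity)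
    positivity
  have hr1 : r ≤ 1 := by
    rw [hr, div_le_one hSpos]
    have hab : Real.sqrt (α * β) = Real.sqrt α * Real.sqrt β := Real.sqrt_mul (le_of_lt ha) β
    have h2 := two_mul_le_add_sq (Real.sqrt α) (Real.sqrt β)
    rw [Real.sq_sqrt (le_of_lt ha), Real.sq_sqrt (le_of_lt hb)] at h2
    rw [hab]; linarith
  have hrS : 2 * Real.sqrt (α * β) = r * S := by rw [hr, div_mul_cancel₀ _ (ne_of_gt hSpos)]
  have hr2 : r ^ 2 - 1 = -((α - β)^2 / S^2) := by
    rw [hr, div_pow, mul_pow, hsq]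
    field_simp
    ring
  -- r ^ m ≤ exp (-4/5)
  have hrm : r ^ m ≤ Real.exp (-(4/5 : ℝ)) := by
    have hlogr : Real.log r ≤ 0 := Real.log_nonpos (le_of_lt hrpos) hr1
    have hlogr2 : Real.log (r ^ 2) = 2 * Real.log r := by
      rw [Real.log_pow]; norm_num
    have hlog2 : Real.log (r ^ 2) ≤ r ^ 2 - 1 := Real.log_le_sub_one_of_pos (by positivity)
    have hrm1 : r ^ m = Real.exp ((m:ℝ) * Real.log r) := by
      rw [← Real.log_pow, Real.exp_log (by positivity)]
    rw [hrm1]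
    apply Real.exp_le_exp.mpr
    have hmono : (m:ℝ) * Real.log r ≤ (4/5 * ((h:ℝ) * S)) * Real.log r :=
      mul_le_mul_of_nonpos_right hm hlogr
    apply hmono.trans
    have hlr : Real.log r ≤ -((α - β)^2 / S^2) / 2 := by
      rw [hlogr2] at hlog2; rw [← hr2] at *; linarith
    have hfac : (0:ℝ) ≤ 4/5 * ((h:ℝ) * S) := by positivity
    have step1 : (4/5 * ((h:ℝ) * S)) * Real.log r
        ≤ (4/5 * ((h:ℝ) * S)) * (-((α - β)^2 / S^2) / 2) :=
      mul_le_mul_of_nonneg_left hlr hfac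
    apply step1.trans
    have heq : (4/5 * ((h:ℝ) * S)) * (-((α - β)^2 / S^2) / 2)
        = -((2/5) * ((h:ℝ) * (α - β)^2) / S) := by
      field_simp; ring
    rw [heq]
    have hfin : (4/5 : ℝ) ≤ (2/5) * ((h:ℝ) * (α - β)^2) / S := by
      rw [le_div_iff₀ hSpos]; nlinarith
    linarith
  -- combine
  have hrml : (2 * Real.sqrt (α * β)) ^ m = r ^ m * S ^ m := by
    rw [hrS, mul_pow]
  rw [hrml]
  have hSm : (0:ℝ) ≤ S ^ m := by positivity
  have hexp : Real.exp (-(4/5 : ℝ)) ≤ 91/200 := by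
    rw [Real.exp_neg]
    rw [inv_le_comm₀ (Real.exp_pos _) (by norm_num)]
    have := exp_45
    linarith
  calc 2 * (r ^ m * S ^ m) = (2 * r ^ m) * S ^ m := by ring
    _ ≤ (2 * (91/200)) * S ^ m := by
        apply mul_le_mul_of_nonneg_right _ hSm
        have := hrm.trans hexp; linarith
    _ = (91/100) * S ^ m := by norm_num

lemma exp_neg_15_le : Real.exp (-(1/5) : ℝ) ≤ 41/50 := by
  rw [Real.exp_neg]
  rw [inv_le_comm₀ (Real.exp_pos _) (by norm_num)]
  have h := exp_15
  have : ((41:ℝ)/50)⁻¹ = 50/41 := by norm_num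
  rw [this]
  linarith


/-! ### The per-fiber comparison -/

/-- the integrand for the winner `i₁`. -/
def FR (p : Fin k → ℝ) (i₁ : Fin k) (ω : Fin h → Fin k) : ℝ :=
  if cnt ω i₁ = maxCnt ω then wt p ω / (numMax ω : ℝ) else 0

/-- the integrand for the challenger, transported to the event that `i₁` wins. -/
def FL (p : Fin k → ℝ) (i₁ j : Fin k) (ω : Fin h → Fin k) : ℝ :=
  if cnt ω i₁ = maxCnt ω then wt (p ∘ ⇑(Equiv.swap i₁ j)) ω / (numMax ω : ℝ) else 0

lemma FR_nonneg {p : Fin k → ℝ} (hp : ∀ l, 0 ≤ p l) (i₁ : Fin k) (ω : Fin h → Fin k) :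
    0 ≤ FR p i₁ ω := by
  unfold FR
  split
  · exact div_nonneg (wt_nonneg hp ω) (Nat.cast_nonneg _)
  · exact le_refl 0

lemma FL_nonneg {p : Fin k → ℝ} (hp : ∀ l, 0 ≤ p l) (i₁ j : Fin k) (ω : Fin h → Fin k) :
    0 ≤ FL p i₁ j ω := by
  unfold FL
  split
  · exact div_nonneg (wt_nonneg (fun l => hp _) ω) (Nat.cast_nonneg _)
  · exact le_refl 0

lemma winPr_eq_FR (p : Fin k → ℝ) (i₁ : Fin k) :
    winPr k h p i₁ = ∑ ω : Fin h → Fin k, FR p i₁ ω := winPr_eq p i₁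

lemma winPr_eq_FL (p : Fin k → ℝ) (i₁ j : Fin k) :
    winPr k h p j = ∑ ω : Fin h → Fin k, FL p i₁ j ω := winPr_swap p i₁ j

lemma Nz_pos {i₁ j : Fin k} (z : Fin h → Fin k) (u : ℕ) : 1 ≤ NzOf i₁ j z u := by
  unfold NzOf; omega

lemma Nz_top {i₁ j : Fin k} (z : Fin h → Fin k) {u : ℕ} (hu : cthr i₁ j z < u) :
    NzOf i₁ j z u = 1 := by
  classical
  unfold cthr at hu
  have h1 : (cnt z i₁ + 1) / 2 < u := lt_of_le_of_lt (le_max_left _ _) hu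
  have h2 : MrOf i₁ j z < u := lt_of_le_of_lt (le_max_right _ _) hu
  have hempty : (Rset i₁ j).filter (fun l => cnt z l = u) = ∅ := by
    apply Finset.filter_eq_empty_iff.mpr
    intro l hl hcl
    have hle := Finset.le_sup (f := cnt z) hl
    unfold MrOf at h2
    omega
  unfold NzOf
  rw [hempty, if_neg (by omega : ¬(cnt z i₁ - u = u))]
  simp

/-- The per-fiber comparison inequality. -/
lemma fiber_ineq {i₁ j : Fin k} (hij : i₁ ≠ j) {p : Fin k → ℝ} (hp : ∀ l, 0 ≤ p l)
    (hbpos : 0 < p j) (hba : p j ≤ p i₁) (z : Fin h → Fin k) (hzj : ∀ t, z t ≠ j)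
    (hK : 2 * (2 * Real.sqrt (p i₁ * p j)) ^ (cnt z i₁)
        ≤ (91/100 : ℝ) * (p i₁ + p j) ^ (cnt z i₁)) :
    ∑ ω ∈ Finset.univ.filter (fun ω : Fin h → Fin k => collapse i₁ j ω = z), FL p i₁ j ω
      ≤ (91/100 : ℝ) *
        ∑ ω ∈ Finset.univ.filter (fun ω : Fin h → Fin k => collapse i₁ j ω = z), FR p i₁ ω := by
  classical
  set α := p i₁ with hα
  set β := p j with hβ
  have hapos : 0 < α := lt_of_lt_of_le hbpos hba
  set m := cnt z i₁ with hm
  set c := cthr i₁ j z with hc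
  set w := wrOf p i₁ j z with hw
  have hw0 : 0 ≤ w := Finset.prod_nonneg fun l _ => pow_nonneg (hp l) _
  set φ : ℕ → ℝ := fun u => 1 / (NzOf i₁ j z u : ℝ) with hφ
  set gR : ℕ → ℝ := fun u => if c ≤ u then α ^ u * β ^ (m - u) * w * φ u else 0 with hgR
  set gL : ℕ → ℝ := fun u => if c ≤ u then β ^ u * α ^ (m - u) * w * φ u else 0 with hgL
  have hFRg : ∀ ω ∈ Finset.univ.filter (fun ω : Fin h → Fin k => collapse i₁ j ω = z),
      FR p i₁ ω = gR (cnt ω i₁) := by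
    intro ω hω
    simp only [Finset.mem_filter, Finset.mem_univ, true_and] at hω
    unfold FR
    by_cases hwin : cnt ω i₁ = maxCnt ω
    · have hcu : c ≤ cnt ω i₁ := (win_iff_fiber hij hω).mp hwin
      rw [if_pos hwin]
      simp only [hgR, hφ]
      rw [if_pos hcu, wt_fiber hij hω p, numMax_fiber hij hω hwin]
      rw [div_eq_mul_one_div]
    · rw [if_neg hwin]
      simp only [hgR]
      rw [if_neg (fun hcu => hwin ((win_iff_fiber hij hω).mpr hcu))]
  have hFLg : ∀ ω ∈ Finset.univ.filter (fun ω : Fin h → Fin k => collapse i₁ j ω = z),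
      FL p i₁ j ω = gL (cnt ω i₁) := by
    intro ω hω
    simp only [Finset.mem_filter, Finset.mem_univ, true_and] at hω
    unfold FL
    by_cases hwin : cnt ω i₁ = maxCnt ω
    · have hcu : c ≤ cnt ω i₁ := (win_iff_fiber hij hω).mp hwin
      rw [if_pos hwin]
      simp only [hgL, hφ]
      rw [if_pos hcu, wt_swap_fiber hij hω p, numMax_fiber hij hω hwin]
      rw [div_eq_mul_one_div]
    · rw [if_neg hwin]
      simp only [hgL]
      rw [if_neg (fun hcu => hwin ((win_iff_fiber hij hω).mpr hcu))]
  rw [Finset.sum_congr rfl hFRg, Finset.sum_congr rfl hFLg,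
    sum_fiber hij z hzj gL, sum_fiber hij z hzj gR]
  -- convert to Icc sums
  have hIccR : Finset.Icc c m ⊆ Finset.range (m + 1) := by
    intro x hx; simp only [Finset.mem_Icc] at hx; simp only [Finset.mem_range]; omega
  have hconvL : ∑ u ∈ Finset.range (m + 1), (m.choose u : ℝ) * gL u
      = w * ∑ u ∈ Finset.Icc c m, (m.choose u : ℝ) * (β ^ u * α ^ (m - u)) * φ u := by
    rw [Finset.mul_sum]
    rw [← Finset.sum_subset hIccR]
    · apply Finset.sum_congr rfl
      intro u hu
      simp only [Finset.mem_Icc] at hu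
      simp only [hgL]
      rw [if_pos hu.1]
      ring
    · intro u hu hnot
      simp only [Finset.mem_range] at hu
      simp only [Finset.mem_Icc] at hnot
      simp only [hgL]
      rw [if_neg (by omega : ¬ c ≤ u)]
      ring
  have hconvR : ∑ u ∈ Finset.range (m + 1), (m.choose u : ℝ) * gR u
      = w * ∑ u ∈ Finset.Icc c m, (m.choose u : ℝ) * (α ^ u * β ^ (m - u)) * φ u := by
    rw [Finset.mul_sum]
    rw [← Finset.sum_subset hIccR]
    · apply Finset.sum_congr rfl
      intro u hu
      simp only [Finset.mem_Icc] at hu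
      simp only [hgR]
      rw [if_pos hu.1]
      ring
    · intro u hu hnot
      simp only [Finset.mem_range] at hu
      simp only [Finset.mem_Icc] at hnot
      simp only [hgR]
      rw [if_neg (by omega : ¬ c ≤ u)]
      ring
  rw [hconvL, hconvR]
  -- apply the slice lemma
  have hc2 : m ≤ 2 * c := by
    have : (m + 1) / 2 ≤ c := le_max_left _ _
    omega
  have hφ0 : ∀ u, 0 ≤ φ u := by
    intro u; rw [hφ]; positivity
  have hφ1 : φ c ≤ 1 := by
    rw [hφ]
    have h1 : (1:ℝ) ≤ (NzOf i₁ j z c : ℝ) := by exact_mod_cast Nz_pos z c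
    rw [div_le_one (by linarith)]
    linarith
  have hφtop : ∀ u, c < u → φ u = 1 := by
    intro u hu
    simp only [hφ]
    rw [Nz_top z hu]
    norm_num
  have hslice := slice_main α β m hapos (le_of_lt hbpos) hba c hc2 φ hφ0 hφ1 hφtop
  set SL := ∑ u ∈ Finset.Icc c m, (m.choose u : ℝ) * (β ^ u * α ^ (m - u)) * φ u with hSL
  set SR := ∑ u ∈ Finset.Icc c m, (m.choose u : ℝ) * (α ^ u * β ^ (m - u)) * φ u with hSR
  have hSR0 : 0 ≤ SR := by
    rw [hSR]
    apply Finset.sum_nonneg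
    intro u _
    have := hφ0 u
    have hb' : (0:ℝ) ≤ β := le_of_lt hbpos
    have ha' : (0:ℝ) ≤ α := le_of_lt hapos
    positivity
  have hchain : (α + β) ^ m * SL ≤ ((91/100 : ℝ) * (α + β) ^ m) * SR := by
    calc (α + β) ^ m * SL ≤ (2 * (2 * Real.sqrt (α * β)) ^ m) * SR := hslice
      _ ≤ ((91/100 : ℝ) * (α + β) ^ m) * SR := mul_le_mul_of_nonneg_right hK hSR0
  have hSm : (0:ℝ) < (α + β) ^ m := by positivity
  have hfin : SL ≤ (91/100 : ℝ) * SR := by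
    have h2 : (α + β) ^ m * SL ≤ (α + β) ^ m * ((91/100 : ℝ) * SR) := by
      calc (α + β) ^ m * SL ≤ ((91/100 : ℝ) * (α + β) ^ m) * SR := hchain
        _ = (α + β) ^ m * ((91/100 : ℝ) * SR) := by ring
    exact le_of_mul_le_mul_left h2 hSm
  calc w * SL ≤ w * ((91/100 : ℝ) * SR) := mul_le_mul_of_nonneg_left hfin hw0
    _ = (91/100 : ℝ) * (w * SR) := by ring

/-! ### Aggregation over fibers and the bad-set bound -/

lemma good_sum {i₁ j : Fin k} (hij : i₁ ≠ j) {p : Fin k → ℝ} (hp : ∀ l, 0 ≤ p l)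
    (hbpos : 0 < p j) (hba : p j ≤ p i₁)
    (hgap : 2 * (p i₁ + p j) ≤ (h:ℝ) * (p i₁ - p j)^2) :
    ∑ ω ∈ Finset.univ.filter (fun ω : Fin h → Fin k =>
        (4:ℝ)/5 * ((h:ℝ) * (p i₁ + p j)) ≤ ((cnt ω i₁ + cnt ω j : ℕ) : ℝ)), FL p i₁ j ω
      ≤ (91/100 : ℝ) * ∑ ω : Fin h → Fin k, FR p i₁ ω := by
  classical
  set Gd := Finset.univ.filter (fun ω : Fin h → Fin k =>
      (4:ℝ)/5 * ((h:ℝ) * (p i₁ + p j)) ≤ ((cnt ω i₁ + cnt ω j : ℕ) : ℝ)) with hGd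
  rw [← Finset.sum_fiberwise Gd (collapse i₁ j) (FL p i₁ j),
    ← Finset.sum_fiberwise Finset.univ (collapse i₁ j) (FR p i₁), Finset.mul_sum]
  apply Finset.sum_le_sum
  intro z _
  have hFR0 : 0 ≤ ∑ ω ∈ Finset.univ.filter
      (fun ω : Fin h → Fin k => collapse i₁ j ω = z), FR p i₁ ω :=
    Finset.sum_nonneg fun ω _ => FR_nonneg hp i₁ ω
  by_cases hzj : ∀ t, z t ≠ j
  · by_cases hne : (Gd.filter (fun ω : Fin h → Fin k => collapse i₁ j ω = z)).Nonempty
    · obtain ⟨ω0, hω0⟩ := hne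
      simp only [hGd, Finset.mem_filter, Finset.mem_univ, true_and] at hω0
      obtain ⟨hgood, hfib0⟩ := hω0
      have hmgood : (4:ℝ)/5 * ((h:ℝ) * (p i₁ + p j)) ≤ ((cnt z i₁ : ℕ) : ℝ) := by
        have := cnt_collapse_one hij hfib0
        rw [this]
        exact_mod_cast hgood
      have hK := goodK (h := h) (m := cnt z i₁) hbpos hba hgap hmgood
      have hsubset : Gd.filter (fun ω : Fin h → Fin k => collapse i₁ j ω = z)
          ⊆ Finset.univ.filter (fun ω : Fin h → Fin k => collapse i₁ j ω = z) := by
        intro ω hω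
        simp only [hGd, Finset.mem_filter, Finset.mem_univ, true_and] at hω ⊢
        exact hω.2
      calc ∑ ω ∈ Gd.filter (fun ω : Fin h → Fin k => collapse i₁ j ω = z), FL p i₁ j ω
          ≤ ∑ ω ∈ Finset.univ.filter
              (fun ω : Fin h → Fin k => collapse i₁ j ω = z), FL p i₁ j ω := by
            apply Finset.sum_le_sum_of_subset_of_nonneg hsubset
            intro ω _ _; exact FL_nonneg hp i₁ j ω
        _ ≤ (91/100 : ℝ) * ∑ ω ∈ Finset.univ.filter
              (fun ω : Fin h → Fin k => collapse i₁ j ω = z), FR p i₁ ω :=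
            fiber_ineq hij hp hbpos hba z hzj hK
    · rw [Finset.not_nonempty_iff_eq_empty] at hne
      rw [hne, Finset.sum_empty]
      positivity
  · push_neg at hzj
    obtain ⟨t0, ht0⟩ := hzj
    have hempty : Gd.filter (fun ω : Fin h → Fin k => collapse i₁ j ω = z) = ∅ := by
      apply Finset.filter_eq_empty_iff.mpr
      intro ω _
      intro hfib
      exact collapse_ne hij ω t0 (hfib ▸ ht0)
    rw [hempty, Finset.sum_empty]
    positivity

lemma mgf_pair {i₁ j : Fin k} (hij : i₁ ≠ j) {p : Fin k → ℝ} (hps : ∑ l, p l = 1) (x : ℝ) :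
    ∑ ω : Fin h → Fin k, wt p ω * x ^ (cnt ω i₁ + cnt ω j)
      = (1 + (x - 1) * (p i₁ + p j)) ^ h := by
  classical
  set f : Fin k → ℝ := fun l => p l * (if l = i₁ ∨ l = j then x else 1) with hf
  have hpoint : ∀ ω : Fin h → Fin k,
      wt p ω * x ^ (cnt ω i₁ + cnt ω j) = ∏ t, f (ω t) := by
    intro ω
    have hdisj : Disjoint (Finset.univ.filter (fun t : Fin h => ω t = i₁))
        (Finset.univ.filter (fun t : Fin h => ω t = j)) := by
      simp only [Finset.disjoint_left, Finset.mem_filter, Finset.mem_univ, true_and]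
      intro t h1 h2
      exact hij (h1 ▸ h2 ▸ rfl)
    have hcard : cnt ω i₁ + cnt ω j
        = (Finset.univ.filter (fun t => ω t = i₁ ∨ ω t = j)).card := by
      rw [Finset.filter_or, Finset.card_union_of_disjoint hdisj]
      rfl
    have hsplit : ∏ t, f (ω t)
        = (∏ t, p (ω t)) * ∏ t, (if ω t = i₁ ∨ ω t = j then x else 1) := by
      rw [← Finset.prod_mul_distrib]
    have hite : ∏ t, (if ω t = i₁ ∨ ω t = j then x else 1)
        = x ^ (Finset.univ.filter (fun t => ω t = i₁ ∨ ω t = j)).card := by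
      rw [← Finset.prod_filter_mul_prod_filter_not Finset.univ
        (fun t => ω t = i₁ ∨ ω t = j) (fun t => if ω t = i₁ ∨ ω t = j then x else 1)]
      rw [Finset.prod_congr rfl (fun t ht => if_pos (Finset.mem_filter.mp ht).2),
        Finset.prod_const]
      rw [Finset.prod_congr rfl (fun t ht => if_neg (Finset.mem_filter.mp ht).2),
        Finset.prod_const_one, mul_one]
    rw [hsplit, hite, hcard]
    rfl
  rw [Finset.sum_congr rfl (fun ω _ => hpoint ω)]
  have hpi := Finset.prod_univ_sum (fun _ : Fin h => (Finset.univ : Finset (Fin k)))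
    (fun _ l => f l)
  rw [Fintype.piFinset_univ] at hpi
  rw [← hpi, Finset.prod_const, Finset.card_univ, Fintype.card_fin]
  congr 1
  have hfl : ∀ l, f l = p l + (if l ∈ ({i₁, j} : Finset (Fin k)) then (x - 1) * p l else 0) := by
    intro l
    simp only [hf]
    by_cases hl : l = i₁ ∨ l = j
    · rw [if_pos hl, if_pos (by simp only [Finset.mem_insert, Finset.mem_singleton]; exact hl)]
      ring
    · rw [if_neg hl, if_neg (by simp only [Finset.mem_insert, Finset.mem_singleton]; exact hl)]
      ring
  rw [Finset.sum_congr rfl (fun l _ => hfl l), Finset.sum_add_distrib, hps,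
    Finset.sum_ite_mem, Finset.univ_inter, Finset.sum_pair hij]
  ring

lemma bad_sum {i₁ j : Fin k} (hij : i₁ ≠ j) {p : Fin k → ℝ} (hp : ∀ l, 0 ≤ p l)
    (hps : ∑ l, p l = 1) :
    ∑ ω ∈ Finset.univ.filter (fun ω : Fin h → Fin k =>
        ¬((4:ℝ)/5 * ((h:ℝ) * (p i₁ + p j)) ≤ ((cnt ω i₁ + cnt ω j : ℕ) : ℝ))), wt p ω
      ≤ Real.exp (-(1/50) * ((h:ℝ) * (p i₁ + p j))) := by
  classical
  set P := p i₁ + p j with hP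
  have hP0 : 0 ≤ P := by rw [hP]; have := hp i₁; have := hp j; linarith
  have hP1 : P ≤ 1 := by
    rw [hP, ← Finset.sum_pair hij, ← hps]
    apply Finset.sum_le_sum_of_subset_of_nonneg (Finset.subset_univ _)
    intro l _ _; exact hp l
  set κ := Real.exp (-(1/5) : ℝ) with hκ
  have hκ0 : 0 < κ := Real.exp_pos _
  have hκ1 : κ ≤ 41/50 := exp_neg_15_le
  have hterm0 : ∀ ω : Fin h → Fin k,
      0 ≤ wt p ω * κ ^ (cnt ω i₁ + cnt ω j) := by
    intro ω
    have := wt_nonneg hp ω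
    positivity
  have hstep : ∀ ω ∈ Finset.univ.filter (fun ω : Fin h → Fin k =>
      ¬((4:ℝ)/5 * ((h:ℝ) * P) ≤ ((cnt ω i₁ + cnt ω j : ℕ) : ℝ))),
      wt p ω ≤ Real.exp ((4:ℝ)/25 * ((h:ℝ) * P)) * (wt p ω * κ ^ (cnt ω i₁ + cnt ω j)) := by
    intro ω hω
    simp only [Finset.mem_filter, Finset.mem_univ, true_and] at hω
    push_neg at hω
    set mm := cnt ω i₁ + cnt ω j with hmm
    have hκm : κ ^ mm = Real.exp ((mm : ℝ) * (-(1/5))) := by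
      rw [hκ, Real.exp_nat_mul]
    have hgain : (1:ℝ) ≤ Real.exp ((4:ℝ)/25 * ((h:ℝ) * P)) * κ ^ mm := by
      rw [hκm, ← Real.exp_add]
      have hq : (0:ℝ) ≤ (4:ℝ)/25 * ((h:ℝ) * P) + (mm:ℝ) * (-(1/5)) := by
        have : (mm : ℝ) < 4/5 * ((h:ℝ) * P) := hω
        nlinarith
      calc (1:ℝ) = Real.exp 0 := Real.exp_zero.symm
        _ ≤ _ := Real.exp_le_exp.mpr hq
    have hwt0 := wt_nonneg hp ω
    calc wt p ω = 1 * wt p ω := (one_mul _).symm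
      _ ≤ (Real.exp ((4:ℝ)/25 * ((h:ℝ) * P)) * κ ^ mm) * wt p ω :=
          mul_le_mul_of_nonneg_right hgain hwt0
      _ = Real.exp ((4:ℝ)/25 * ((h:ℝ) * P)) * (wt p ω * κ ^ mm) := by ring
  calc ∑ ω ∈ Finset.univ.filter (fun ω : Fin h → Fin k =>
        ¬((4:ℝ)/5 * ((h:ℝ) * P) ≤ ((cnt ω i₁ + cnt ω j : ℕ) : ℝ))), wt p ω
      ≤ ∑ ω ∈ Finset.univ.filter (fun ω : Fin h → Fin k =>
        ¬((4:ℝ)/5 * ((h:ℝ) * P) ≤ ((cnt ω i₁ + cnt ω j : ℕ) : ℝ))),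
          Real.exp ((4:ℝ)/25 * ((h:ℝ) * P)) * (wt p ω * κ ^ (cnt ω i₁ + cnt ω j)) :=
        Finset.sum_le_sum hstep
    _ ≤ ∑ ω : Fin h → Fin k,
          Real.exp ((4:ℝ)/25 * ((h:ℝ) * P)) * (wt p ω * κ ^ (cnt ω i₁ + cnt ω j)) := by
        apply Finset.sum_le_sum_of_subset_of_nonneg (Finset.filter_subset _ _)
        intro ω _ _
        have := hterm0 ω
        positivity
    _ = Real.exp ((4:ℝ)/25 * ((h:ℝ) * P)) *
          ∑ ω : Fin h → Fin k, wt p ω * κ ^ (cnt ω i₁ + cnt ω j) := by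
        rw [Finset.mul_sum]
    _ = Real.exp ((4:ℝ)/25 * ((h:ℝ) * P)) * (1 + (κ - 1) * P) ^ h := by
        rw [mgf_pair hij hps κ]
    _ ≤ Real.exp ((4:ℝ)/25 * ((h:ℝ) * P)) * Real.exp (-(9/50) * P) ^ h := by
        apply mul_le_mul_of_nonneg_left _ (le_of_lt (Real.exp_pos _))
        apply pow_le_pow_left₀
        · nlinarith [mul_nonneg (le_of_lt hκ0) hP0]
        · have h1 : 1 + (κ - 1) * P ≤ Real.exp ((κ - 1) * P) := by
            have := Real.add_one_le_exp ((κ - 1) * P)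
            linarith
          apply h1.trans
          apply Real.exp_le_exp.mpr
          nlinarith
    _ = Real.exp ((4:ℝ)/25 * ((h:ℝ) * P) + (h:ℝ) * (-(9/50) * P)) := by
        rw [← Real.exp_nat_mul, ← Real.exp_add]
    _ ≤ Real.exp (-(1/50) * ((h:ℝ) * P)) := by
        apply Real.exp_le_exp.mpr
        have hh0 : (0:ℝ) ≤ (h:ℝ) := Nat.cast_nonneg h
        nlinarith

end Aux

open Finset Aux

set_option maxHeartbeats 1000000 in
/-- there is a constant `0 < C6 < 1` such that for `n` large enough,
`k ≤ n`, `p_1 ≥ … ≥ p_k`, `h·p_1 ≥ 324·log n`, and every opinion `j ≠ 1` with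
`p_1 - p_j ≥ √(2(p_1 + p_2)/h)`, one has `Pr(W_1) ≥ (1/(1 - C6))·Pr(W_j)`. -/
theorem win_ratio_large_bias_lower_bound :
    ∃ C6 : ℝ, 0 < C6 ∧ C6 < 1 ∧
      ∃ n0 : ℕ, ∀ (n k h : ℕ), n0 ≤ n → ∀ (hk : 2 ≤ k), 1 ≤ h → k ≤ n →
        ∀ p : Fin k → ℝ, (∀ i, 0 ≤ p i) → ∑ i, p i = 1 →
          (∀ i j : Fin k, i ≤ j → p j ≤ p i) →
          324 * Real.log n ≤ (h : ℝ) * p (o₁ k hk) →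
          ∀ j : Fin k, j ≠ o₁ k hk →
            Real.sqrt (2 * (p (o₁ k hk) + p (o₂ k hk)) / h) ≤ p (o₁ k hk) - p j →
            (1 / (1 - C6)) * winPr k h p j ≤ winPr k h p (o₁ k hk) := by
  classical
  refine ⟨1/25, by norm_num, by norm_num, 50, ?_⟩
  intro n k h hn hk hh hkn p hp hps hsort hlog j hj hgapsqrt
  set i₁ := o₁ k hk with hi₁
  have hij : i₁ ≠ j := Ne.symm hj
  have hconst : (1 : ℝ) / (1 - 1/25) = 25/24 := by norm_num
  rw [hconst]
  -- basic positivity facts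
  have hn50 : (50:ℝ) ≤ (n:ℝ) := by exact_mod_cast hn
  have hn1 : (1:ℝ) < (n:ℝ) := by linarith
  have hnpos : (0:ℝ) < (n:ℝ) := by linarith
  have hlogpos : 0 < Real.log n := Real.log_pos hn1
  have hhpos : (0:ℝ) < (h:ℝ) := by exact_mod_cast hh
  have hk1 : 1 ≤ k := by omega
  have hle1 : ∀ i : Fin k, i₁ ≤ i := by
    intro i
    exact Fin.le_def.mpr (Nat.zero_le _)
  have hba : p j ≤ p i₁ := hsort i₁ j (hle1 j)
  have hαpos : 0 < p i₁ := by
    by_contra hcon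
    push_neg at hcon
    have h1 : (h:ℝ) * p i₁ ≤ 0 := mul_nonpos_of_nonneg_of_nonpos (le_of_lt hhpos) hcon
    nlinarith
  -- the trivial case p j = 0
  have hwin1_nonneg : 0 ≤ winPr k h p i₁ := winPr_nonneg hp i₁
  by_cases hβ0 : p j = 0
  · rw [winPr_of_zero hh j hβ0]
    linarith
  have hbpos : 0 < p j := lt_of_le_of_ne (hp j) (Ne.symm hβ0)
  -- the gap inequality
  have hjval : (1:ℕ) ≤ j.val := by
    by_contra hcon
    push_neg at hcon
    apply hj
    apply Fin.ext
    simp only [hi₁, o₁]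
    omega
  have ho₂j : o₂ k hk ≤ j := Fin.le_def.mpr (by exact hjval)
  have hβ2 : p j ≤ p (o₂ k hk) := hsort (o₂ k hk) j ho₂j
  have hgap2 : 2 * (p i₁ + p j) ≤ (h:ℝ) * (p i₁ - p j)^2 := by
    have hx0 : (0:ℝ) ≤ 2 * (p i₁ + p (o₂ k hk)) / h := by
      have := hp (o₂ k hk)
      positivity
    have hs := Real.sq_sqrt hx0
    have hsn := Real.sqrt_nonneg (2 * (p i₁ + p (o₂ k hk)) / h)
    have hsq : 2 * (p i₁ + p (o₂ k hk)) / h ≤ (p i₁ - p j)^2 := by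
      nlinarith [hgapsqrt]
    rw [div_le_iff₀ hhpos] at hsq
    nlinarith
  -- decomposition of winPr j
  have hwinj : winPr k h p j = ∑ ω : Fin h → Fin k, FL p i₁ j ω := winPr_eq_FL p i₁ j
  have hwin1 : winPr k h p i₁ = ∑ ω : Fin h → Fin k, FR p i₁ ω := winPr_eq_FR p i₁
  have hsplit := (Finset.sum_filter_add_sum_filter_not Finset.univ
    (fun ω : Fin h → Fin k =>
      (4:ℝ)/5 * ((h:ℝ) * (p i₁ + p j)) ≤ ((cnt ω i₁ + cnt ω j : ℕ) : ℝ))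
    (FL p i₁ j)).symm
  -- good part
  have hgood := good_sum hij hp hbpos hba hgap2
  -- bad part
  set σ := Equiv.swap i₁ j with hσ
  have hbad1 : ∑ ω ∈ Finset.univ.filter (fun ω : Fin h → Fin k =>
        ¬((4:ℝ)/5 * ((h:ℝ) * (p i₁ + p j)) ≤ ((cnt ω i₁ + cnt ω j : ℕ) : ℝ))), FL p i₁ j ω
      ≤ ∑ ω ∈ Finset.univ.filter (fun ω : Fin h → Fin k =>
        ¬((4:ℝ)/5 * ((h:ℝ) * (p i₁ + p j)) ≤ ((cnt ω i₁ + cnt ω j : ℕ) : ℝ))),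
          wt (p ∘ ⇑σ) ω := by
    apply Finset.sum_le_sum
    intro ω _
    have hw0 : 0 ≤ wt (p ∘ ⇑σ) ω := wt_nonneg (fun l => hp (σ l)) ω
    unfold FL
    split
    · apply div_le_self hw0
      exact_mod_cast numMax_pos hk1 ω
    · exact hw0
  have hbad2 : ∑ ω ∈ Finset.univ.filter (fun ω : Fin h → Fin k =>
        ¬((4:ℝ)/5 * ((h:ℝ) * (p i₁ + p j)) ≤ ((cnt ω i₁ + cnt ω j : ℕ) : ℝ))),
          wt (p ∘ ⇑σ) ω
      = ∑ ω ∈ Finset.univ.filter (fun ω : Fin h → Fin k =>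
        ¬((4:ℝ)/5 * ((h:ℝ) * (p i₁ + p j)) ≤ ((cnt ω i₁ + cnt ω j : ℕ) : ℝ))), wt p ω := by
    rw [Finset.sum_filter, Finset.sum_filter]
    rw [sum_comp_perm σ (fun ω : Fin h → Fin k =>
      if ¬((4:ℝ)/5 * ((h:ℝ) * (p i₁ + p j)) ≤ ((cnt ω i₁ + cnt ω j : ℕ) : ℝ))
        then wt p ω else 0)]
    apply Finset.sum_congr rfl
    intro ω _
    have hcond : cnt (⇑σ ∘ ω) i₁ + cnt (⇑σ ∘ ω) j = cnt ω i₁ + cnt ω j := by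
      rw [cnt_comp, cnt_comp, hσ, Equiv.symm_swap, Equiv.swap_apply_left,
        Equiv.swap_apply_right]
      omega
    rw [hcond, wt_comp]
  have hbad3 := bad_sum (h := h) hij hp hps (i₁ := i₁) (j := j)
  -- numeric bound on the bad part
  have hhP : 324 * Real.log n ≤ (h:ℝ) * (p i₁ + p j) := by
    have h1 : (h:ℝ) * p i₁ ≤ (h:ℝ) * (p i₁ + p j) := by nlinarith [hp j]
    linarith
  have hexp2 : Real.exp (-(1/50) * ((h:ℝ) * (p i₁ + p j))) ≤ 1/(n:ℝ)^2 := by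
    have h1 : -(1/50) * ((h:ℝ) * (p i₁ + p j)) ≤ (-2 : ℝ) * Real.log n := by
      nlinarith [hhP, hlogpos]
    calc Real.exp (-(1/50) * ((h:ℝ) * (p i₁ + p j)))
        ≤ Real.exp ((-2 : ℝ) * Real.log n) := Real.exp_le_exp.mpr h1
      _ = 1/(n:ℝ)^2 := by
          rw [show ((-2 : ℝ) * Real.log n) = -(Real.log n + Real.log n) by ring,
            Real.exp_neg, Real.exp_add, Real.exp_log hnpos, one_div, sq]
  have hwin1n : 1/(n:ℝ) ≤ winPr k h p i₁ := by
    have h1 := winPr_top_ge (h := h) hk1 hp hps i₁ (fun i => hsort i₁ i (hle1 i))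
    have hkn' : (k:ℝ) ≤ (n:ℝ) := by exact_mod_cast hkn
    rw [div_le_iff₀ hnpos]
    nlinarith [hwin1_nonneg]
  have h1n2 : 1/(n:ℝ)^2 ≤ (1/50 : ℝ) * winPr k h p i₁ := by
    have ha : 1/(n:ℝ) ≤ 1/50 := by
      rw [div_le_div_iff₀ hnpos (by norm_num)]
      linarith
    calc 1/(n:ℝ)^2 = (1/(n:ℝ)) * (1/(n:ℝ)) := by ring
      _ ≤ (1/50) * (1/(n:ℝ)) := mul_le_mul_of_nonneg_right ha (by positivity)
      _ ≤ (1/50) * winPr k h p i₁ := mul_le_mul_of_nonneg_left hwin1n (by norm_num)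
  -- combine everything
  have hkey : winPr k h p j ≤ (24/25 : ℝ) * winPr k h p i₁ := by
    rw [hwinj, hsplit]
    have hbadfinal : ∑ ω ∈ Finset.univ.filter (fun ω : Fin h → Fin k =>
          ¬((4:ℝ)/5 * ((h:ℝ) * (p i₁ + p j)) ≤ ((cnt ω i₁ + cnt ω j : ℕ) : ℝ))), FL p i₁ j ω
        ≤ (1/50 : ℝ) * winPr k h p i₁ := by
      calc _ ≤ _ := hbad1
        _ = _ := hbad2
        _ ≤ _ := hbad3
        _ ≤ 1/(n:ℝ)^2 := hexp2
        _ ≤ (1/50 : ℝ) * winPr k h p i₁ := h1n2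
    have hgoodfinal : ∑ ω ∈ Finset.univ.filter (fun ω : Fin h → Fin k =>
          (4:ℝ)/5 * ((h:ℝ) * (p i₁ + p j)) ≤ ((cnt ω i₁ + cnt ω j : ℕ) : ℝ)), FL p i₁ j ω
        ≤ (91/100 : ℝ) * winPr k h p i₁ := by
      rw [hwin1]
      exact hgood
    linarith
  linarith [hkey, hwin1_nonneg]
end
end

section
/- Let k ≥ 2 and let p, p' : {1,…,k} → ℝ be probability vectors (all entries nonnegative, each summing to 1) with 0 < p_1 < 1 and p'_1 > 0. Suppose {1,…,k} is partitioned as {1} ∪ I ∪ J ∪ K (disjoint sets not containing 1) such that: for every j ∈ I, p'_1 − p'_j > p_1 − p_j; for every j ∈ J, p'_j / p'_1 < p_j / p_1; and for every j ∈ K, p'_j = 0. Then p'_1 > p_1. -/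
open scoped BigOperators

noncomputable section

/-- if the opinion set `{1,…,k}` is partitioned as `{1} ∪ I ∪ J ∪ K`
where for `j ∈ I` the bias towards opinion 1 increases (`p'_1 - p'_j > p_1 - p_j`),
for `j ∈ J` the ratio decreases (`p'_j/p'_1 < p_j/p_1`), and for `j ∈ K` the
opinion disappears (`p'_j = 0`), then `p'_1 > p_1`. -/
theorem plurality_mass_increases
    (k : ℕ) (hk : 2 ≤ k) (p p' : Fin k → ℝ)
    (hp0 : ∀ i, 0 ≤ p i) (hps : ∑ i, p i = 1)
    (hp'0 : ∀ i, 0 ≤ p' i) (hp's : ∑ i, p' i = 1)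
    (hp1pos : 0 < p (o₁ k hk)) (hp1lt : p (o₁ k hk) < 1)
    (hp'1pos : 0 < p' (o₁ k hk))
    (I J K : Finset (Fin k))
    (hIJ : Disjoint I J) (hIK : Disjoint I K) (hJK : Disjoint J K)
    (h1 : o₁ k hk ∉ I ∪ J ∪ K)
    (hcover : insert (o₁ k hk) (I ∪ J ∪ K) = Finset.univ)
    (hI : ∀ j ∈ I, p (o₁ k hk) - p j < p' (o₁ k hk) - p' j)
    (hJ : ∀ j ∈ J, p' j / p' (o₁ k hk) < p j / p (o₁ k hk))
    (hK : ∀ j ∈ K, p' j = 0) :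
    p (o₁ k hk) < p' (o₁ k hk) := by
  by_contra hcon
  push_neg at hcon
  set o := o₁ k hk with ho
  set S := I ∪ J ∪ K with hS
  have hoS : o ∉ S := h1
  have hsum : p o + ∑ j ∈ S, p j = 1 := by
    rw [← hps, ← hcover, Finset.sum_insert hoS]
  have hsum' : p' o + ∑ j ∈ S, p' j = 1 := by
    rw [← hp's, ← hcover, Finset.sum_insert hoS]
  have hlt : ∀ j ∈ I ∪ J, p' j < p j := by
    intro j hj
    rcases Finset.mem_union.mp hj with hj | hj
    · have := hI j hj
      linarith
    · have hr := hJ j hj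
      have h2 : p' j * p o < p j * p' o := (div_lt_div_iff₀ hp'1pos hp1pos).mp hr
      nlinarith [hp0 j, hp'0 j]
  have hle : ∀ j ∈ S, p' j ≤ p j := by
    intro j hj
    rcases Finset.mem_union.mp hj with hj | hj
    · exact (hlt j hj).le
    · rw [hK j hj]; exact hp0 j
  rcases (I ∪ J).eq_empty_or_nonempty with he | ⟨j0, hj0⟩
  · have hSK : S = K := by rw [hS, he, Finset.empty_union]
    have hz : ∑ j ∈ S, p' j = 0 := Finset.sum_eq_zero (fun j hj => hK j (hSK ▸ hj))
    linarith
  · have hs : ∑ j ∈ S, p' j < ∑ j ∈ S, p j :=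
      Finset.sum_lt_sum hle ⟨j0, Finset.mem_union_left K hj0, hlt j0 hj0⟩
    linarith
end
end
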